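/- For the fully balanced binary tree B_n of depth n ≥ 2, the number of labeled histories equals (2^n − 2)! divided by the product over k from 1 to n−2 of (2^{n−k} − 1)^{2^k}. -/

import Mathlib

/-- Binary rooted trees (leaf labels abstracted away; leaves are identified
by their positions, encoded as lists of booleans). -/
inductive BTree : Type
  | leaf : BTree
  | node : BTree → BTree → BTree
  deriving DecidableEq

namespace BTree

/-- A position in a binary tree: a path from the root, `false` = left, `true` = right. -/
abbrev Pos := List Bool

/-- The subtree rooted at a position (junk value `leaf` below a leaf). -/
def subtreeAt : BTree → Pos → BTree
  | t, [] => t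
  | leaf, _ :: _ => leaf
  | node l _, false :: p => subtreeAt l p
  | node _ r, true :: p => subtreeAt r p

/-- `p` is a valid position (node) of the tree. -/
def isValidPos : BTree → Pos → Prop
  | _, [] => True
  | leaf, _ :: _ => False
  | node l _, false :: p => isValidPos l p
  | node _ r, true :: p => isValidPos r p

/-- The set of positions of the leaves of a tree. -/
def leafPositions : BTree → Finset Pos
  | leaf => {([] : Pos)}
  | node l r =>
      (leafPositions l).image (false :: ·) ∪ (leafPositions r).image (true :: ·)

/-- The number of leaves of a tree. -/
def numLeaves (t : BTree) : ℕ := (leafPositions t).card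

/-- The set of positions of the internal (non-leaf) nodes of a tree. -/
def internalPos : BTree → Finset Pos
  | leaf => ∅
  | node l r =>
      insert ([] : Pos)
        ((internalPos l).image (false :: ·) ∪ (internalPos r).image (true :: ·))

/-- A root ancestral configuration of `S`: an antichain of non-root nodes of `S`
whose descendant-leaf sets partition the leaf set, i.e. a set of valid non-root
positions such that every leaf position has exactly one weak ancestor in the set. -/
def IsConfig (S : BTree) (A : Finset Pos) : Prop :=
  (∀ p ∈ A, isValidPos S p ∧ p ≠ []) ∧
  ∀ q ∈ leafPositions S, ∃! p, p ∈ A ∧ p <+: q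

/-- The partial order on configurations: `ConfigLE A B` (that is, `A ≺ B`) iff `B`
is obtained from `A` by coalescing some (possibly no) pairs of lineages;
equivalently, every node of `A` is a weak descendant of some node of `B`. -/
def ConfigLE (A B : Finset Pos) : Prop :=
  ∀ p ∈ A, ∃ q ∈ B, q <+: p

/-- The covering relation on root ancestral configurations of `S`. -/
def Covers (S : BTree) (A B : Finset Pos) : Prop :=
  IsConfig S A ∧ IsConfig S B ∧ ConfigLE A B ∧ A ≠ B ∧
  ∀ C, IsConfig S C → ConfigLE A C → ConfigLE C B → C = A ∨ C = B

/-- The maximal root configuration: the two children of the root. -/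
def rootConfig : Finset Pos := {[false], [true]}

/-- The number of root ancestral configurations of `S`. -/
noncomputable def numConfigs (S : BTree) : ℕ := Nat.card {A : Finset Pos // IsConfig S A}

/-- A labeled history of `S`: a linear ordering of the internal nodes of `S`
in which every internal node appears after all of its internal descendants. -/
def IsLabHist (S : BTree) (L : List Pos) : Prop :=
  L.Nodup ∧ (∀ p, p ∈ L ↔ p ∈ internalPos S) ∧
  ∀ i j : Fin L.length, L.get i <+: L.get j → (j : ℕ) ≤ (i : ℕ)

/-- The number of labeled histories of `S`. -/
noncomputable def numHist (S : BTree) : ℕ := Nat.card {L : List Pos // IsLabHist S L}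

/-- The caterpillar tree on `n` leaves (`caterpillar 1` is a single leaf). -/
def caterpillar : ℕ → BTree
  | 0 => leaf
  | 1 => leaf
  | n + 2 => node (caterpillar (n + 1)) leaf

end BTree

open BTree

/-- The fully balanced binary tree of depth `n`, with `2^n` leaves. -/
def balanced : ℕ → BTree
  | 0 => BTree.leaf
  | n + 1 => node (balanced n) (balanced n)

section LabHistAux
open List

lemma isLabHist_iff (S : BTree) (L : List Pos) :
    IsLabHist S L ↔ L.Nodup ∧ (∀ p, p ∈ L ↔ p ∈ internalPos S) ∧
      L.Pairwise (fun a b => ¬ a <+: b) := by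
  unfold IsLabHist
  refine and_congr_right fun _ => and_congr_right fun _ => ?_
  rw [List.pairwise_iff_get]
  constructor
  · intro h i j hij hpre
    exact absurd (h i j hpre) (not_le.mpr hij)
  · intro h i j hpre
    rcases le_or_gt (j : ℕ) (i : ℕ) with h' | h'
    · exact h'
    · exact absurd hpre (h i j h')

lemma mem_internalPos_node {l r : BTree} {p : Pos} :
    p ∈ internalPos (node l r) ↔
      p = [] ∨ (∃ q ∈ internalPos l, false :: q = p) ∨ ∃ q ∈ internalPos r, true :: q = p := by
  simp [internalPos]

lemma card_internalPos_node (l r : BTree) :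
    (internalPos (node l r)).card = 1 + (internalPos l).card + (internalPos r).card := by
  rw [internalPos, Finset.card_insert_of_notMem, Finset.card_union_of_disjoint]
  · rw [Finset.card_image_of_injective _ (List.cons_injective),
      Finset.card_image_of_injective _ (List.cons_injective)]
    ring
  · simp only [Finset.disjoint_left, Finset.mem_image]
    rintro p ⟨q, _, rfl⟩ ⟨q', _, h⟩
    simp at h
  · simp

lemma labHist_length_eq {S : BTree} {L : List Pos} (h : IsLabHist S L) :
    L.length = (internalPos S).card := by
  classical
  have hts : L.toFinset = internalPos S := Finset.ext fun p => by
    simp [List.mem_toFinset, h.2.1 p]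
  rw [← hts, List.toFinset_card_of_nodup h.1]

lemma numHist_leaf : numHist BTree.leaf = 1 := by
  have h1 : IsLabHist BTree.leaf [] :=
    ⟨List.nodup_nil, fun p => by simp [internalPos], fun i _ _ => i.elim0⟩
  have huniq : ∀ x : {L // IsLabHist BTree.leaf L}, x = ⟨[], h1⟩ := by
    rintro ⟨L, hL⟩
    apply Subtype.ext
    apply List.eq_nil_iff_forall_not_mem.mpr
    intro a ha
    have := (hL.2.1 a).mp ha
    simpa [internalPos] using this
  haveI : Unique {L // IsLabHist BTree.leaf L} := ⟨⟨⟨[], h1⟩⟩, huniq⟩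
  exact Nat.card_unique

end LabHistAux
section Merge
open List

/-- Merge two lists of positions according to a boolean mask, tagging elements. -/
def bmerge : List Bool → List Pos → List Pos → List Pos
  | [], _, _ => []
  | false :: v, x :: xs, ys => (false :: x) :: bmerge v xs ys
  | true :: v, xs, y :: ys => (true :: y) :: bmerge v xs ys
  | _ :: _, _, _ => []

lemma mem_bmerge {v : List Bool} {xs ys : List Pos}
    (hx : v.count false = xs.length) (hy : v.count true = ys.length) {p : Pos} :
    p ∈ bmerge v xs ys ↔ (∃ x ∈ xs, p = false :: x) ∨ ∃ y ∈ ys, p = true :: y := by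
  induction v generalizing xs ys with
  | nil =>
    simp only [List.count_nil] at hx hy
    obtain rfl : xs = [] := List.length_eq_zero_iff.mp hx.symm
    obtain rfl : ys = [] := List.length_eq_zero_iff.mp hy.symm
    simp [bmerge]
  | cons b v ih =>
    cases b with
    | false =>
      rcases xs with _ | ⟨x, xs⟩
      · simp [List.count_cons] at hx
      · have hx' : v.count false = xs.length := by
          simp [List.count_cons] at hx; omega
        have hy' : v.count true = ys.length := by
          simp [List.count_cons] at hy; omega
        simp only [bmerge, List.mem_cons, ih hx' hy']
        constructor
        · rintro (rfl | h | h)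
          · exact Or.inl ⟨x, by simp⟩
          · obtain ⟨x', hx', rfl⟩ := h; exact Or.inl ⟨x', by simp [hx']⟩
          · exact Or.inr h
        · rintro (⟨x', hx', rfl⟩ | h)
          · rcases hx' with rfl | h'
            · exact Or.inl rfl
            · exact Or.inr (Or.inl ⟨x', h', rfl⟩)
          · exact Or.inr (Or.inr h)
    | true =>
      rcases ys with _ | ⟨y, ys⟩
      · simp [List.count_cons] at hy
      · have hx' : v.count false = xs.length := by
          simp [List.count_cons] at hx; omega
        have hy' : v.count true = ys.length := by
          simp [List.count_cons] at hy; omega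
        simp only [bmerge, List.mem_cons, ih hx' hy']
        constructor
        · rintro (rfl | h | h)
          · exact Or.inr ⟨y, by simp⟩
          · exact Or.inl h
          · obtain ⟨y', hy', rfl⟩ := h; exact Or.inr ⟨y', by simp [hy']⟩
        · rintro (h | ⟨y', hy', rfl⟩)
          · exact Or.inr (Or.inl h)
          · rcases hy' with rfl | h'
            · exact Or.inl rfl
            · exact Or.inr (Or.inr ⟨y', h', rfl⟩)

lemma pairwise_bmerge {R : Pos → Pos → Prop}
    (hcross : ∀ (b c : Bool) (p q : Pos), b ≠ c → R (b :: p) (c :: q))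
    {v : List Bool} {xs ys : List Pos}
    (hx : v.count false = xs.length) (hy : v.count true = ys.length)
    (hxs : xs.Pairwise fun p q => R (false :: p) (false :: q))
    (hys : ys.Pairwise fun p q => R (true :: p) (true :: q)) :
    (bmerge v xs ys).Pairwise R := by
  induction v generalizing xs ys with
  | nil => exact List.Pairwise.nil
  | cons b v ih =>
    cases b with
    | false =>
      rcases xs with _ | ⟨x, xs⟩
      · simp [List.count_cons] at hx
      · have hx' : v.count false = xs.length := by
          simp [List.count_cons] at hx; omega
        have hy' : v.count true = ys.length := by
          simp [List.count_cons] at hy; omega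
        rw [List.pairwise_cons] at hxs
        refine List.Pairwise.cons ?_ (ih hx' hy' hxs.2 hys)
        intro p hp
        rcases (mem_bmerge hx' hy').mp hp with ⟨x', hx'', rfl⟩ | ⟨y', _, rfl⟩
        · exact hxs.1 x' hx''
        · exact hcross false true _ _ (by simp)
    | true =>
      rcases ys with _ | ⟨y, ys⟩
      · simp [List.count_cons] at hy
      · have hx' : v.count false = xs.length := by
          simp [List.count_cons] at hx; omega
        have hy' : v.count true = ys.length := by
          simp [List.count_cons] at hy; omega
        rw [List.pairwise_cons] at hys
        refine List.Pairwise.cons ?_ (ih hx' hy' hxs hys.2)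
        intro p hp
        rcases (mem_bmerge hx' hy').mp hp with ⟨x', _, rfl⟩ | ⟨y', hy'', rfl⟩
        · exact hcross true false _ _ (by simp)
        · exact hys.1 y' hy''

lemma map_headI_bmerge {v : List Bool} {xs ys : List Pos}
    (hx : v.count false = xs.length) (hy : v.count true = ys.length) :
    (bmerge v xs ys).map (·.headI) = v := by
  induction v generalizing xs ys with
  | nil =>
    simp [bmerge]
  | cons b v ih =>
    cases b with
    | false =>
      rcases xs with _ | ⟨x, xs⟩
      · simp [List.count_cons] at hx
      · have hx' : v.count false = xs.length := by
          simp [List.count_cons] at hx; omega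
        have hy' : v.count true = ys.length := by
          simp [List.count_cons] at hy; omega
        simp [bmerge, ih hx' hy']
    | true =>
      rcases ys with _ | ⟨y, ys⟩
      · simp [List.count_cons] at hy
      · have hx' : v.count false = xs.length := by
          simp [List.count_cons] at hx; omega
        have hy' : v.count true = ys.length := by
          simp [List.count_cons] at hy; omega
        simp [bmerge, ih hx' hy']

lemma filter_bmerge_false {v : List Bool} {xs ys : List Pos}
    (hx : v.count false = xs.length) (hy : v.count true = ys.length) :
    ((bmerge v xs ys).filter fun p => !p.headI).map List.tail = xs := by
  induction v generalizing xs ys with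
  | nil =>
    simp only [List.count_nil] at hx
    obtain rfl : xs = [] := List.length_eq_zero_iff.mp hx.symm
    simp [bmerge]
  | cons b v ih =>
    cases b with
    | false =>
      rcases xs with _ | ⟨x, xs⟩
      · simp [List.count_cons] at hx
      · have hx' : v.count false = xs.length := by
          simp [List.count_cons] at hx; omega
        have hy' : v.count true = ys.length := by
          simp [List.count_cons] at hy; omega
        simp [bmerge, List.filter_cons, ih hx' hy']
    | true =>
      rcases ys with _ | ⟨y, ys⟩
      · simp [List.count_cons] at hy
      · have hx' : v.count false = xs.length := by
          simp [List.count_cons] at hx; omega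
        have hy' : v.count true = ys.length := by
          simp [List.count_cons] at hy; omega
        simp [bmerge, List.filter_cons, ih hx' hy']

lemma filter_bmerge_true {v : List Bool} {xs ys : List Pos}
    (hx : v.count false = xs.length) (hy : v.count true = ys.length) :
    ((bmerge v xs ys).filter fun p => p.headI).map List.tail = ys := by
  induction v generalizing xs ys with
  | nil =>
    simp only [List.count_nil] at hy
    obtain rfl : ys = [] := List.length_eq_zero_iff.mp hy.symm
    simp [bmerge]
  | cons b v ih =>
    cases b with
    | false =>
      rcases xs with _ | ⟨x, xs⟩
      · simp [List.count_cons] at hx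
      · have hx' : v.count false = xs.length := by
          simp [List.count_cons] at hx; omega
        have hy' : v.count true = ys.length := by
          simp [List.count_cons] at hy; omega
        simp [bmerge, List.filter_cons, ih hx' hy']
    | true =>
      rcases ys with _ | ⟨y, ys⟩
      · simp [List.count_cons] at hy
      · have hx' : v.count false = xs.length := by
          simp [List.count_cons] at hx; omega
        have hy' : v.count true = ys.length := by
          simp [List.count_cons] at hy; omega
        simp [bmerge, List.filter_cons, ih hx' hy']

lemma bmerge_recover (M : List Pos) :
    (∀ p ∈ M, p ≠ []) →
    bmerge (M.map (·.headI)) ((M.filter fun p => !p.headI).map List.tail)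
      ((M.filter fun p => p.headI).map List.tail) = M := by
  induction M with
  | nil => intro _; rfl
  | cons e M ih =>
    intro hM
    obtain ⟨b, p, rfl⟩ : ∃ b p, e = b :: p := by
      cases e with
      | nil => exact absurd rfl (hM _ (by simp))
      | cons b p => exact ⟨b, p, rfl⟩
    have ih' := ih fun q hq => hM q (List.mem_cons_of_mem _ hq)
    cases b <;> simp [bmerge, List.filter_cons, ih']

end Merge
section Decompose
open List

lemma labHist_concat {l r : BTree} {L : List Pos} (h : IsLabHist (node l r) L) :
    L = L.dropLast ++ [([] : Pos)] ∧ ([] : Pos) ∉ L.dropLast := by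
  have hmem : ([] : Pos) ∈ L := (h.2.1 []).mpr (by simp [internalPos])
  have hne : L ≠ [] := by rintro rfl; simp at hmem
  obtain ⟨i, hi⟩ := List.mem_iff_get.mp hmem
  have hpos : 0 < L.length := i.pos
  have hlast : (i : ℕ) = L.length - 1 := by
    have h1 : ∀ j : Fin L.length, (j : ℕ) ≤ (i : ℕ) := fun j =>
      h.2.2 i j (by rw [hi]; exact List.nil_prefix)
    have h2 := h1 ⟨L.length - 1, by omega⟩
    have h3 := i.isLt
    simp at h2
    omega
  have hgl : L.getLast hne = [] := by
    rw [List.getLast_eq_getElem, ← hi]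
    simp [hlast]
  have h1 : L.dropLast ++ [([] : Pos)] = L := by
    rw [← hgl]; exact List.dropLast_append_getLast hne
  refine ⟨h1.symm, ?_⟩
  have hnd := h.1
  rw [← h1] at hnd
  exact fun hmem' => (List.disjoint_of_nodup_append hnd) hmem' (by simp)

lemma labHist_decompose {l r : BTree} {L : List Pos} (h : IsLabHist (node l r) L) :
    IsLabHist l ((L.dropLast.filter fun p => !p.headI).map List.tail) ∧
    IsLabHist r ((L.dropLast.filter fun p => p.headI).map List.tail) ∧
    (L.dropLast.map (·.headI)).length = (internalPos l).card + (internalPos r).card ∧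
    (L.dropLast.map (·.headI)).count false = (internalPos l).card := by
  obtain ⟨hL, hnm⟩ := labHist_concat h
  set M := L.dropLast with hMdef
  have hmemM : ∀ p, p ∈ M ↔
      (∃ q ∈ internalPos l, false :: q = p) ∨ ∃ q ∈ internalPos r, true :: q = p := by
    intro p
    constructor
    · intro hp
      have hpL : p ∈ L := by rw [hL]; exact List.mem_append_left _ hp
      rcases mem_internalPos_node.mp ((h.2.1 p).mp hpL) with rfl | hrest
      · exact absurd hp hnm
      · exact hrest
    · intro hp
      have hpne : p ≠ [] := by rcases hp with ⟨q, _, rfl⟩ | ⟨q, _, rfl⟩ <;> simp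
      have hpL : p ∈ L := (h.2.1 p).mpr (mem_internalPos_node.mpr (Or.inr hp))
      rw [hL] at hpL
      rcases List.mem_append.mp hpL with h' | h'
      · exact h'
      · exact absurd (by simpa using h') hpne
  have hMnd : M.Nodup := (List.dropLast_sublist L).nodup h.1
  have hMpw : M.Pairwise (fun a b => ¬ a <+: b) :=
    List.Pairwise.sublist (List.dropLast_sublist L) ((isLabHist_iff _ _).mp h).2.2
  -- shapes
  have shapeF : ∀ e ∈ M.filter (fun p => !p.headI), ∃ q, e = false :: q := by
    intro e he
    obtain ⟨heM, hh⟩ := List.mem_filter.mp he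
    rcases (hmemM e).mp heM with ⟨q, _, rfl⟩ | ⟨q, _, rfl⟩
    · exact ⟨q, rfl⟩
    · simp at hh
  have shapeT : ∀ e ∈ M.filter (fun p => p.headI), ∃ q, e = true :: q := by
    intro e he
    obtain ⟨heM, hh⟩ := List.mem_filter.mp he
    rcases (hmemM e).mp heM with ⟨q, _, rfl⟩ | ⟨q, _, rfl⟩
    · simp at hh
    · exact ⟨q, rfl⟩
  -- left component
  have hxs : IsLabHist l ((M.filter fun p => !p.headI).map List.tail) := by
    rw [isLabHist_iff]
    refine ⟨?_, ?_, ?_⟩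
    · refine List.Nodup.map_on ?_ (hMnd.filter _)
      intro e he e' he' hte
      obtain ⟨q, rfl⟩ := shapeF e he
      obtain ⟨q', rfl⟩ := shapeF e' he'
      simpa using hte
    · intro q
      simp only [List.mem_map, List.mem_filter]
      constructor
      · rintro ⟨e, ⟨heM, hh⟩, rfl⟩
        rcases (hmemM e).mp heM with ⟨q', hq', rfl⟩ | ⟨q', hq', rfl⟩
        · simpa using hq'
        · simp at hh
      · intro hq
        exact ⟨false :: q, ⟨(hmemM _).mpr (Or.inl ⟨q, hq, rfl⟩), by simp⟩, rfl⟩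
    · rw [List.pairwise_map]
      refine List.Pairwise.imp_of_mem ?_
        (List.Pairwise.sublist List.filter_sublist hMpw)
      intro a b ha hb hR hpre
      obtain ⟨q, rfl⟩ := shapeF a ha
      obtain ⟨q', rfl⟩ := shapeF b hb
      exact hR (List.cons_prefix_cons.mpr ⟨rfl, by simpa using hpre⟩)
  -- right component
  have hys : IsLabHist r ((M.filter fun p => p.headI).map List.tail) := by
    rw [isLabHist_iff]
    refine ⟨?_, ?_, ?_⟩
    · refine List.Nodup.map_on ?_ (hMnd.filter _)
      intro e he e' he' hte
      obtain ⟨q, rfl⟩ := shapeT e he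
      obtain ⟨q', rfl⟩ := shapeT e' he'
      simpa using hte
    · intro q
      simp only [List.mem_map, List.mem_filter]
      constructor
      · rintro ⟨e, ⟨heM, hh⟩, rfl⟩
        rcases (hmemM e).mp heM with ⟨q', hq', rfl⟩ | ⟨q', hq', rfl⟩
        · simp at hh
        · simpa using hq'
      · intro hq
        exact ⟨true :: q, ⟨(hmemM _).mpr (Or.inr ⟨q, hq, rfl⟩), by simp⟩, rfl⟩
    · rw [List.pairwise_map]
      refine List.Pairwise.imp_of_mem ?_
        (List.Pairwise.sublist List.filter_sublist hMpw)
      intro a b ha hb hR hpre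
      obtain ⟨q, rfl⟩ := shapeT a ha
      obtain ⟨q', rfl⟩ := shapeT b hb
      exact hR (List.cons_prefix_cons.mpr ⟨rfl, by simpa using hpre⟩)
  refine ⟨hxs, hys, ?_, ?_⟩
  · have hLlen := labHist_length_eq h
    rw [card_internalPos_node] at hLlen
    have hlen : M.length + 1 = L.length := by
      conv_rhs => rw [hL]
      simp
    simp only [List.length_map]
    omega
  · have hxlen := labHist_length_eq hxs
    have hc1 : (M.map (·.headI)).count false = (M.filter fun p => !p.headI).length := by
      rw [List.count_eq_countP, List.countP_map, List.countP_eq_length_filter]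
      congr 1
      apply List.filter_congr
      intro a _
      cases ha : a.headI <;> simp [Function.comp, ha]
    rw [hc1, ← hxlen]
    simp
end Decompose
section NodeCount
open List

lemma labHist_bmerge {l r : BTree} {v : List Bool} {xs ys : List Pos}
    (hlen : v.length = (internalPos l).card + (internalPos r).card)
    (hc : v.count false = (internalPos l).card)
    (hxs : IsLabHist l xs) (hys : IsLabHist r ys) :
    IsLabHist (node l r) (bmerge v xs ys ++ [([] : Pos)]) := by
  have hx : v.count false = xs.length := by rw [labHist_length_eq hxs]; exact hc
  have hy : v.count true = ys.length := by
    have h1 := List.count_false_add_count_true v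
    rw [labHist_length_eq hys]
    omega
  rw [isLabHist_iff]
  refine ⟨?_, ?_, ?_⟩
  · rw [List.nodup_append]
    refine ⟨?_, List.nodup_singleton _, ?_⟩
    · refine pairwise_bmerge (R := fun a b => a ≠ b) ?_ hx hy ?_ ?_
      · intro b c p q hbc he
        injection he with h1 _
        exact hbc h1
      · exact hxs.1.imp fun h he => h (by injection he)
      · exact hys.1.imp fun h he => h (by injection he)
    · intro p hp q hq
      have : q = [] := by simpa using hq
      subst this
      rcases (mem_bmerge hx hy).mp hp with ⟨x, _, rfl⟩ | ⟨y, _, rfl⟩ <;> simp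
  · intro p
    rw [List.mem_append, mem_bmerge hx hy, mem_internalPos_node]
    simp only [hxs.2.1, hys.2.1, List.mem_singleton]
    constructor
    · rintro ((⟨x, hx', rfl⟩ | ⟨y, hy', rfl⟩) | rfl)
      · exact Or.inr (Or.inl ⟨x, hx', rfl⟩)
      · exact Or.inr (Or.inr ⟨y, hy', rfl⟩)
      · exact Or.inl rfl
    · rintro (rfl | ⟨q, hq, rfl⟩ | ⟨q, hq, rfl⟩)
      · exact Or.inr rfl
      · exact Or.inl (Or.inl ⟨q, hq, rfl⟩)
      · exact Or.inl (Or.inr ⟨q, hq, rfl⟩)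
  · rw [List.pairwise_append]
    refine ⟨?_, List.pairwise_singleton _ _, ?_⟩
    · refine pairwise_bmerge ?_ hx hy ?_ ?_
      · intro b c p q hbc hpre
        rw [List.cons_prefix_cons] at hpre
        exact hbc hpre.1
      · exact ((isLabHist_iff _ _).mp hxs).2.2.imp fun h hpre =>
          h (List.cons_prefix_cons.mp hpre).2
      · exact ((isLabHist_iff _ _).mp hys).2.2.imp fun h hpre =>
          h (List.cons_prefix_cons.mp hpre).2
    · intro a ha b hb
      have hb' : b = [] := by simpa using hb
      subst hb'
      rcases (mem_bmerge hx hy).mp ha with ⟨x, _, rfl⟩ | ⟨y, _, rfl⟩ <;> simp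
end NodeCount
section Masks

instance finite_masks (n k : ℕ) :
    Finite {v : List Bool // v.length = n ∧ v.count false = k} := by
  apply Finite.of_injective
    (fun v : {v : List Bool // v.length = n ∧ v.count false = k} =>
      (fun i : Fin n => v.1.get (i.cast v.2.1.symm)))
  rintro ⟨v, hv⟩ ⟨w, hw⟩ h
  apply Subtype.ext
  apply List.ext_get (hv.1.trans hw.1.symm)
  intro i h1 h2
  exact congrFun h ⟨i, hv.1 ▸ h1⟩

def maskEquiv (n k : ℕ) :
    {v : List Bool // v.length = n + 1 ∧ v.count false = k + 1} ≃
      ({v : List Bool // v.length = n ∧ v.count false = k + 1} ⊕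
       {v : List Bool // v.length = n ∧ v.count false = k}) where
  toFun x := match x with
    | ⟨[], hv⟩ => absurd hv.1 (by simp)
    | ⟨true :: v, hv⟩ => Sum.inl ⟨v, by
        obtain ⟨h1, h2⟩ := hv
        simp only [List.length_cons] at h1
        simp only [List.count_cons] at h2
        simp at h2
        constructor <;> omega⟩
    | ⟨false :: v, hv⟩ => Sum.inr ⟨v, by
        obtain ⟨h1, h2⟩ := hv
        simp only [List.length_cons] at h1
        simp only [List.count_cons] at h2
        simp at h2
        constructor <;> omega⟩
  invFun s := match s with
    | Sum.inl ⟨v, hv⟩ => ⟨true :: v, by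
        obtain ⟨h1, h2⟩ := hv
        constructor
        · simp [h1]
        · simp [List.count_cons, h2]⟩
    | Sum.inr ⟨v, hv⟩ => ⟨false :: v, by
        obtain ⟨h1, h2⟩ := hv
        constructor
        · simp [h1]
        · simp [List.count_cons, h2]⟩
  left_inv := by
    rintro ⟨v, hv⟩
    cases v with
    | nil => exact absurd hv.1 (by simp)
    | cons b v => cases b <;> rfl
  right_inv := by rintro (⟨v, hv⟩ | ⟨v, hv⟩) <;> rfl

lemma card_masks (n k : ℕ) :
    Nat.card {v : List Bool // v.length = n ∧ v.count false = k} = n.choose k := by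
  induction n generalizing k with
  | zero =>
    cases k with
    | zero =>
      haveI : Unique {v : List Bool // v.length = 0 ∧ v.count false = 0} :=
        ⟨⟨⟨[], by simp⟩⟩, by
          rintro ⟨v, hv, _⟩
          apply Subtype.ext
          exact List.length_eq_zero_iff.mp hv⟩
      exact Nat.card_unique
    | succ k =>
      haveI : IsEmpty {v : List Bool // v.length = 0 ∧ v.count false = k + 1} := by
        refine ⟨?_⟩
        rintro ⟨v, hv, hc⟩
        obtain rfl := List.length_eq_zero_iff.mp hv
        simp at hc
      exact Nat.card_of_isEmpty
  | succ n ih =>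
    cases k with
    | zero =>
      haveI : Unique {v : List Bool // v.length = n + 1 ∧ v.count false = 0} := by
        refine ⟨⟨⟨List.replicate (n+1) true, by simp, by simp [List.count_replicate]⟩⟩, ?_⟩
        rintro ⟨v, hv, hc⟩
        apply Subtype.ext
        have hall : ∀ x ∈ v, x = true := by
          intro x hx
          cases x
          · exact absurd hx (List.count_eq_zero.mp hc)
          · rfl
        exact List.eq_replicate_iff.mpr ⟨hv, hall⟩
      rw [Nat.card_unique]
      simp
    | succ k =>
      rw [Nat.card_congr (maskEquiv n k), Nat.card_sum, ih, ih, Nat.choose_succ_succ]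
      exact Nat.add_comm _ _
end Masks
section NodeFormula
open List

lemma numHist_node (l r : BTree) :
    numHist (node l r) =
      (((internalPos l).card + (internalPos r).card).choose (internalPos l).card) *
        (numHist l * numHist r) := by
  classical
  have e : {L : List Pos // IsLabHist (node l r) L} ≃
      {v : List Bool // v.length = (internalPos l).card + (internalPos r).card ∧
          v.count false = (internalPos l).card} ×
        ({x : List Pos // IsLabHist l x} × {y : List Pos // IsLabHist r y}) :=
    { toFun := fun L =>
        ⟨⟨L.1.dropLast.map (·.headI),
          (labHist_decompose L.2).2.2.1, (labHist_decompose L.2).2.2.2⟩,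
         ⟨(L.1.dropLast.filter fun p => !p.headI).map List.tail, (labHist_decompose L.2).1⟩,
         ⟨(L.1.dropLast.filter fun p => p.headI).map List.tail, (labHist_decompose L.2).2.1⟩⟩
      invFun := fun t =>
        ⟨bmerge t.1.1 t.2.1.1 t.2.2.1 ++ [([] : Pos)],
          labHist_bmerge t.1.2.1 t.1.2.2 t.2.1.2 t.2.2.2⟩
      left_inv := by
        rintro ⟨L, hL⟩
        apply Subtype.ext
        dsimp only
        have hc := labHist_concat hL
        have hMne : ∀ p ∈ L.dropLast, p ≠ [] := fun p hp he => hc.2 (he ▸ hp)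
        rw [bmerge_recover _ hMne]
        exact hc.1.symm
      right_inv := by
        rintro ⟨⟨v, hv1, hv2⟩, ⟨xs, hxs⟩, ⟨ys, hys⟩⟩
        have hx : v.count false = xs.length := by rw [labHist_length_eq hxs]; exact hv2
        have hy : v.count true = ys.length := by
          have h1 := List.count_false_add_count_true v
          rw [labHist_length_eq hys]; omega
        simp only [List.dropLast_concat]
        refine Prod.ext_iff.mpr ⟨Subtype.ext ?_, Prod.ext_iff.mpr ⟨Subtype.ext ?_, Subtype.ext ?_⟩⟩
        · exact map_headI_bmerge hx hy
        · exact filter_bmerge_false hx hy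
        · exact filter_bmerge_true hx hy }
  rw [numHist, Nat.card_congr e, Nat.card_prod, Nat.card_prod, card_masks]
  rfl

end NodeFormula
section BalancedCount
open scoped Nat

lemma card_internalPos_balanced (n : ℕ) :
    (internalPos (balanced n)).card = 2 ^ n - 1 := by
  induction n with
  | zero => simp [balanced, internalPos]
  | succ n ih =>
    rw [show balanced (n+1) = node (balanced n) (balanced n) from rfl,
      card_internalPos_node, ih, pow_succ]
    have h1 : 1 ≤ 2 ^ n := Nat.one_le_two_pow
    omega

lemma numHist_balanced_succ (n : ℕ) :
    numHist (balanced (n+1)) =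
      ((2 ^ (n+1) - 2).choose (2 ^ n - 1)) *
        (numHist (balanced n) * numHist (balanced n)) := by
  rw [show balanced (n+1) = node (balanced n) (balanced n) from rfl,
    numHist_node, card_internalPos_balanced]
  have h1 : 1 ≤ 2 ^ n := Nat.one_le_two_pow
  have h2 : 2 ^ n - 1 + (2 ^ n - 1) = 2 ^ (n+1) - 2 := by rw [pow_succ]; omega
  rw [h2]

lemma key_identity (n : ℕ) :
    numHist (balanced n) * ∏ k ∈ Finset.Icc 1 (n - 2), (2 ^ (n - k) - 1) ^ 2 ^ k
      = (2 ^ n - 2)! := by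
  induction n with
  | zero =>
    have hb0 : numHist (balanced 0) = 1 := numHist_leaf
    have he : Finset.Icc 1 (0 - 2) = (∅ : Finset ℕ) := Finset.Icc_eq_empty (by omega)
    rw [hb0, he]
    simp [Nat.factorial]
  | succ n ih =>
    rcases Nat.eq_zero_or_pos n with rfl | hn
    · have hb0 : numHist (balanced 0) = 1 := numHist_leaf
      have he : Finset.Icc 1 (0 + 1 - 2) = (∅ : Finset ℕ) := Finset.Icc_eq_empty (by omega)
      rw [numHist_balanced_succ 0, hb0, he]
      simp [Nat.factorial]
    · have h2n : 1 ≤ 2 ^ n := Nat.one_le_two_pow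
      have h2 : 2 ≤ 2 ^ n := by
        calc 2 = 2 ^ 1 := (pow_one 2).symm
        _ ≤ 2 ^ n := Nat.pow_le_pow_right (by norm_num) hn
      have hm : 2 ^ (n+1) - 2 = 2 * (2 ^ n - 1) := by rw [pow_succ]; omega
      have hD : ∏ k ∈ Finset.Icc 1 (n + 1 - 2), (2 ^ (n + 1 - k) - 1) ^ 2 ^ k
          = (2 ^ n - 1) ^ 2 *
            (∏ k ∈ Finset.Icc 1 (n - 2), (2 ^ (n - k) - 1) ^ 2 ^ k) ^ 2 := by
        rcases Nat.lt_or_ge n 2 with h | h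
        · interval_cases n
          have he : Finset.Icc 1 0 = (∅ : Finset ℕ) := Finset.Icc_eq_empty (by omega)
          simp [he]
        · have h1 : n + 1 - 2 = n - 1 := by omega
          rw [h1]
          have himg : Finset.Icc 1 (n - 1) = (Finset.Icc 0 (n - 2)).image (· + 1) := by
            rw [Finset.image_add_right_Icc]
            congr 1
            omega
          rw [himg, Finset.prod_image (by intro a _ b _ hab; beta_reduce at hab; omega)]
          have hins : Finset.Icc 0 (n - 2) = insert 0 (Finset.Icc 1 (n - 2)) := by
            ext x; simp [Finset.mem_Icc]; omega
          rw [hins, Finset.prod_insert (by simp)]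
          have hterm0 : (2 ^ (n + 1 - (0 + 1)) - 1) ^ 2 ^ (0 + 1) = (2 ^ n - 1) ^ 2 := by
            norm_num
          rw [hterm0]
          congr 1
          rw [← Finset.prod_pow]
          apply Finset.prod_congr rfl
          intro k hk
          have hk' := Finset.mem_Icc.mp hk
          have hnk : n + 1 - (k + 1) = n - k := by omega
          rw [hnk, pow_succ, pow_mul]
      set m := 2 ^ n - 1 with hmdef
      set F := (2 ^ n - 2)! with hFdef
      set D := ∏ k ∈ Finset.Icc 1 (n - 2), (2 ^ (n - k) - 1) ^ 2 ^ k with hDdef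
      have hfac : m ! = m * F := by
        rw [hFdef, hmdef, show 2 ^ n - 1 = (2 ^ n - 2) + 1 by omega, Nat.factorial_succ]
      have hch : (2 * m).choose m * m ! * m ! = (2 * m)! := by
        have hh := Nat.choose_mul_factorial_mul_factorial (n := 2 * m) (k := m) (by omega)
        rwa [show 2 * m - m = m by omega] at hh
      rw [numHist_balanced_succ, hD, hm, ← hch, hfac, ← ih]
      ring
end BalancedCount

open scoped Nat in
/-- For the fully balanced tree `B_n` of depth `n ≥ 2`, the number of labeled
histories equals `(2^n - 2)!` divided by the product over `k` from `1` to `n-2`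
of `(2^{n-k} - 1)^{2^k}`. -/
theorem balanced_numHist (n : ℕ) (hn : 2 ≤ n) :
    numHist (balanced n) =
      (2 ^ n - 2)! / ∏ k ∈ Finset.Icc 1 (n - 2), (2 ^ (n - k) - 1) ^ (2 ^ k) := by
  have hkey := key_identity n
  have hDpos : 0 < ∏ k ∈ Finset.Icc 1 (n - 2), (2 ^ (n - k) - 1) ^ 2 ^ k := by
    apply Finset.prod_pos
    intro k hk
    have hk' := Finset.mem_Icc.mp hk
    have h2 : 2 ≤ 2 ^ (n - k) := by
      calc 2 = 2 ^ 1 := (pow_one 2).symm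
      _ ≤ 2 ^ (n - k) := Nat.pow_le_pow_right (by norm_num) (by omega)
    exact pow_pos (by omega) _
  rw [← hkey, Nat.mul_div_cancel _ hDpos]
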